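/- For all natural numbers i ≥ j, the integer sequence n ↦ F(ni) · F(nj) is annihilated by the quartic polynomial (x² − L(i+j)·x + (−1)^{i+j}) · (x² − (−1)^j · L(i−j) · x + (−1)^{i+j}); that is, writing q for this polynomial, for every n, ∑_{k=0}^{4} (coefficient of x^k in q) · F((n+k)i) · F((n+k)j) = 0. -/

import Mathlib

open Polynomial Finset

def F : ℕ → ℤ
  | 0 => 0
  | 1 => 1
  | (n + 2) => F (n + 1) + F n

def L : ℕ → ℤ
  | 0 => 2
  | 1 => 1
  | (n + 2) => L (n + 1) + L n

lemma F_eq_fib : ∀ m, F m = (Nat.fib m : ℤ)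
  | 0 => rfl
  | 1 => rfl
  | (n+2) => by rw [F, F_eq_fib (n+1), F_eq_fib n, Nat.fib_add_two]; push_cast; ring

lemma F_real (m : ℕ) : Real.sqrt 5 * (F m : ℝ) = Real.goldenRatio ^ m - Real.goldenConj ^ m := by
  have h5 : Real.sqrt 5 ≠ 0 := by positivity
  rw [F_eq_fib]
  push_cast
  rw [Real.coe_fib_eq]
  field_simp

lemma L_real : ∀ m : ℕ, (L m : ℝ) = Real.goldenRatio ^ m + Real.goldenConj ^ m
  | 0 => by norm_num [L]
  | 1 => by norm_num [L]
  | (n+2) => by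
      rw [L, Int.cast_add, L_real (n+1), L_real n]
      have hg : Real.goldenRatio ^ (n+2) = Real.goldenRatio ^ (n+1) + Real.goldenRatio ^ n := by
        calc Real.goldenRatio ^ (n+2) = Real.goldenRatio ^ n * Real.goldenRatio ^ 2 := by ring
        _ = Real.goldenRatio ^ n * (Real.goldenRatio + 1) := by rw [Real.goldenRatio_sq]
        _ = Real.goldenRatio ^ (n+1) + Real.goldenRatio ^ n := by ring
      have hc : Real.goldenConj ^ (n+2) = Real.goldenConj ^ (n+1) + Real.goldenConj ^ n := by
        calc Real.goldenConj ^ (n+2) = Real.goldenConj ^ n * Real.goldenConj ^ 2 := by ring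
        _ = Real.goldenConj ^ n * (Real.goldenConj + 1) := by rw [Real.goldenConj_sq]
        _ = Real.goldenConj ^ (n+1) + Real.goldenConj ^ n := by ring
      rw [hg, hc]; ring

theorem fib_product_annihilated :
    ∀ i j : ℕ, j ≤ i → ∀ n : ℕ,
      ∑ k ∈ Finset.range 5,
        ((X ^ 2 - C (L (i + j)) * X + C ((-1 : ℤ) ^ (i + j))) *
         (X ^ 2 - C ((-1 : ℤ) ^ j * L (i - j)) * X +
           C ((-1 : ℤ) ^ (i + j))) : Polynomial ℤ).coeff k *
        (F ((n + k) * i) * F ((n + k) * j)) = 0 := by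
  intro i j hji n
  set A : ℤ := L (i + j) with hAdef
  set B : ℤ := (-1 : ℤ) ^ j * L (i - j) with hBdef
  set e : ℤ := (-1 : ℤ) ^ (i + j) with hedef
  have hq : ((X ^ 2 - C A * X + C e) * (X ^ 2 - C B * X + C e) : Polynomial ℤ)
      = C (e*e) + C (-(e*(A+B))) * X + C (A*B + 2*e) * X^2 + C (-(A+B)) * X^3 + X^4 := by
    simp only [map_mul, map_add, map_neg, map_ofNat]
    ring
  rw [Finset.sum_range_succ, Finset.sum_range_succ, Finset.sum_range_succ,
    Finset.sum_range_succ, Finset.sum_range_succ, Finset.sum_range_zero, hq]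
  simp only [coeff_add, coeff_C_mul, coeff_X_pow, coeff_C, coeff_X]
  norm_num
  -- now an integer identity; pass to ℝ
  set φ := Real.goldenRatio with hφ
  set ψ := Real.goldenConj with hψ
  have hmul : φ * ψ = -1 := Real.goldenRatio_mul_goldenConj
  have h5 : Real.sqrt 5 * Real.sqrt 5 = 5 := Real.mul_self_sqrt (by norm_num)
  have hFP : ∀ k : ℕ, ((F ((n + k) * i) : ℝ) * (F ((n + k) * j) : ℝ))
      = ((φ ^ i) ^ n * (φ ^ i) ^ k - (ψ ^ i) ^ n * (ψ ^ i) ^ k) *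
        ((φ ^ j) ^ n * (φ ^ j) ^ k - (ψ ^ j) ^ n * (ψ ^ j) ^ k) / 5 := by
    intro k
    have hsplit : ∀ (x : ℝ) (m : ℕ), x ^ ((n + k) * m) = (x ^ m) ^ n * (x ^ m) ^ k := by
      intro x m
      rw [show (n + k) * m = m * n + m * k by ring, pow_add, pow_mul, pow_mul]
    have h1 := F_real ((n + k) * i)
    have h2 := F_real ((n + k) * j)
    rw [hsplit φ i, hsplit ψ i] at h1
    rw [hsplit φ j, hsplit ψ j] at h2
    rw [← h1, ← h2, eq_div_iff (by norm_num : (5:ℝ) ≠ 0)]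
    linear_combination (-((F ((n + k) * i) : ℝ) * (F ((n + k) * j) : ℝ))) * h5
  have hA : (A : ℝ) = φ ^ i * φ ^ j + ψ ^ i * ψ ^ j := by
    rw [hAdef, L_real, pow_add, pow_add]
  have hb : φ ^ (i - j) * φ ^ j = φ ^ i := by
    rw [← pow_add, Nat.sub_add_cancel hji]
  have hc : ψ ^ (i - j) * ψ ^ j = ψ ^ i := by
    rw [← pow_add, Nat.sub_add_cancel hji]
  have hB : (B : ℝ) = φ ^ i * ψ ^ j + φ ^ j * ψ ^ i := by
    rw [hBdef]
    push_cast
    rw [L_real, ← hmul, mul_pow]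
    linear_combination (ψ ^ j) * hb + (φ ^ j) * hc
  have he : (e : ℝ) = (φ ^ i * ψ ^ i) * (φ ^ j * ψ ^ j) := by
    rw [hedef]
    push_cast
    rw [← hmul, mul_pow, pow_add, pow_add]
    ring
  -- reduce the integer goal to a real identity
  apply (Int.cast_injective (α := ℝ))
  push_cast
  have h0 := hFP 0
  norm_num at h0
  rw [hA, hB, he, h0, hFP 1, hFP 2, hFP 3, hFP 4]
  field_simp
  ring
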